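/- Let D = {(a,b) ∈ ℤ×ℤ : b ≠ a and b ≠ a+1}. Call a function f : D → ℤ a grading function if there exists an integer m such that f(a,b) = sgn(b−a)·(−1)^(a+b)·m for all (a,b) ∈ D. Then f : D → ℤ is a grading function if and only if both of the following hold: (1) f(a,b) = −f(b,a) for all (a,b) ∈ D with |a−b| > 1, and (2) f(a,b) = f(b,a+1) for all (a,b) ∈ D. -/

import Mathlib

lemma negOnePow_congr' {m n : ℕ} (h : m % 2 = n % 2) : (-1:ℤ)^m = (-1)^n := by
  rcases Nat.even_or_odd m with hm | hm
  · rw [hm.neg_one_pow,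
      (Nat.even_iff.mpr (by have := Nat.even_iff.mp hm; omega)).neg_one_pow]
  · rw [hm.neg_one_pow,
      (Nat.odd_iff.mpr (by have := Nat.odd_iff.mp hm; omega)).neg_one_pow]

/-- `f : ℤ × ℤ → ℤ` (considered on the domain `D = {(a,b) | b ≠ a, b ≠ a+1}`) is a
*grading function* if there exists an integer `m` such that
`f a b = sgn (b - a) * (-1)^(a+b) * m` for all `(a, b) ∈ D`. -/
def IsGradingFunction (f : ℤ → ℤ → ℤ) : Prop :=
  ∃ m : ℤ, ∀ a b : ℤ, b ≠ a → b ≠ a + 1 →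
    f a b = (b - a).sign * (-1 : ℤ) ^ (a + b).natAbs * m

/-- A map `f` on `D = {(a,b) | b ≠ a, b ≠ a+1}` is a grading function if and only if
(1) `f a b = - f b a` whenever `|a - b| > 1`, and (2) `f a b = f b (a+1)` on all of `D`. -/
theorem isGradingFunction_iff (f : ℤ → ℤ → ℤ) :
    IsGradingFunction f ↔
      ((∀ a b : ℤ, b ≠ a → b ≠ a + 1 → 1 < |a - b| → f a b = - f b a) ∧
       (∀ a b : ℤ, b ≠ a → b ≠ a + 1 → f a b = f b (a + 1))) := by
  constructor
  · rintro ⟨m, hm⟩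
    constructor
    · intro a b hba hba1 habs
      have hab1 : a ≠ b + 1 := by rcases lt_abs.mp habs with h' | h' <;> omega
      rw [hm a b hba hba1, hm b a (by omega) hab1]
      have hs : (a - b).sign = - (b - a).sign := by
        rw [show a - b = -(b - a) by ring, Int.sign_neg]
      have hp : (-1:ℤ)^(b+a).natAbs = (-1)^(a+b).natAbs := negOnePow_congr' (by omega)
      rw [hs, hp]; ring
    · intro a b hba hba1
      rw [hm a b hba hba1, hm b (a+1) (by omega) (by omega)]
      have hp : (-1:ℤ)^(b+(a+1)).natAbs = -(-1:ℤ)^(a+b).natAbs := by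
        rw [negOnePow_congr' (show (b+(a+1)).natAbs % 2 = ((a+b).natAbs + 1) % 2 by omega),
          pow_succ]; ring
      rw [hp]
      rcases lt_or_gt_of_ne hba with h | h
      · rw [Int.sign_eq_neg_one_of_neg (by omega : b - a < 0),
          Int.sign_eq_one_of_pos (by omega : (0:ℤ) < a + 1 - b)]; ring
      · have hb2 : a + 2 ≤ b := by omega
        rw [Int.sign_eq_one_of_pos (by omega : (0:ℤ) < b - a),
          Int.sign_eq_neg_one_of_neg (by omega : a + 1 - b < 0)]; ring
  · rintro ⟨h1, h2⟩
    have shift : ∀ a b : ℤ, b ≠ a → b ≠ a + 1 → f a b = f (a+1) (b+1) := by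
      intro a b hba hba1
      rw [h2 a b hba hba1, h2 b (a+1) (by omega) (by omega)]
    have shiftn : ∀ (n : ℤ) (a b : ℤ), b ≠ a → b ≠ a + 1 → f a b = f (a+n) (b+n) := by
      intro n
      induction n using Int.induction_on with
      | zero => intro a b _ _; simp
      | succ k ih =>
        intro a b hba hba1
        rw [shift a b hba hba1, ih (a+1) (b+1) (by omega) (by omega),
          show a + 1 + k = a + (k + 1) by ring, show b + 1 + k = b + (k + 1) by ring]
      | pred k ih =>
        intro a b hba hba1
        have hsh := shift (a + (-(k:ℤ)-1)) (b + (-(k:ℤ)-1)) (by omega) (by omega)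
        calc f a b = f (a + -(k:ℤ)) (b + -(k:ℤ)) := ih a b hba hba1
        _ = f (a + (-(k:ℤ)-1) + 1) (b + (-(k:ℤ)-1) + 1) := by ring_nf
        _ = f (a + (-(k:ℤ)-1)) (b + (-(k:ℤ)-1)) := hsh.symm
    have step : ∀ d : ℤ, 2 ≤ d → f 0 (d+1) = - f 0 d := by
      intro d hd
      have e1 : f 0 (-d) = f (-d) 1 := by
        simpa using h2 0 (-d) (by omega) (by omega)
      have e2 : f (-d) 1 = f 0 (1 + d) := by
        simpa using shiftn d (-d) 1 (by omega) (by omega)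
      have e3 : f d 0 = f 0 (-d) := by
        simpa using shiftn (-d) d 0 (by omega) (by omega)
      have e4 : f d 0 = - f 0 d := h1 d 0 (by omega) (by omega) (by
        rw [sub_zero, abs_of_pos (by omega : (0:ℤ) < d)]; omega)
      rw [show d + 1 = 1 + d by ring, ← e2, ← e1, ← e3, e4]
    have keyN : ∀ n : ℕ, f 0 ((n:ℤ) + 2) = (-1:ℤ)^n * f 0 2 := by
      intro n
      induction n with
      | zero => norm_num
      | succ k ih =>
        have := step ((k:ℤ) + 2) (by omega)
        push_cast
        rw [show (k:ℤ) + 1 + 2 = ((k:ℤ) + 2) + 1 by ring, this, ih, pow_succ]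
        ring
    have key : ∀ d : ℤ, 2 ≤ d → f 0 d = (-1:ℤ)^d.natAbs * f 0 2 := by
      intro d hd
      obtain ⟨n, rfl⟩ : ∃ n : ℕ, d = (n:ℤ) + 2 := ⟨(d - 2).toNat, by omega⟩
      rw [keyN n, show ((n:ℤ)+2).natAbs = n + 2 from by omega, pow_add]
      norm_num
    have key2 : ∀ d : ℤ, d ≠ 0 → d ≠ 1 →
        f 0 d = d.sign * (-1:ℤ)^d.natAbs * f 0 2 := by
      intro d hd0 hd1
      rcases le_or_gt 2 d with hd | hd
      · rw [key d hd, Int.sign_eq_one_of_pos (by omega)]; ring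
      · have hdneg : d ≤ -1 := by omega
        have e1 : f 0 d = f d 1 := by
          have := h2 0 d hd0 (by omega); simpa using this
        have e2 : f d 1 = f 0 (1 - d) := by
          have := shiftn (-d) d 1 (by omega) (by omega)
          simpa [sub_eq_add_neg] using this
        rw [e1, e2, key (1 - d) (by omega),
          show (1-d).natAbs = d.natAbs + 1 from by omega, pow_succ,
          Int.sign_eq_neg_one_of_neg (by omega)]
        ring
    refine ⟨f 0 2, fun a b hba hba1 => ?_⟩
    have e0 : f a b = f 0 (b - a) := by
      have := shiftn (-a) a b hba hba1
      simpa [sub_eq_add_neg] using this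
    rw [e0, key2 (b - a) (by omega) (by omega),
      negOnePow_congr' (by omega : (b-a).natAbs % 2 = (a+b).natAbs % 2)]
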